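/- arXiv:2004.01586 — 3 statements merged into one kernel-verified Lean document; each statement's English description precedes it below -/
import Mathlib

section
/- A general homogeneous polynomial of degree d ≥ 2 in three variables has slice rank exactly 2; equivalently, the set of degree-d forms in k[x₀,x₁,x₂] that can be written as ℓ·g with ℓ linear is a proper Zariski-closed subset of the space of all degree-d forms. -/
open MvPolynomial

namespace SliceAux

lemma sum_eq_degree {α : Type*} (μ : α →₀ ℕ) : (μ.sum fun _ e => e) = μ.degree := rfl

noncomputable instance fintypeDegEq {α : Type*} [Finite α] (n : ℕ) :
    Fintype {μ : α →₀ ℕ // (μ.sum fun _ e => e) = n} := by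
  have : Finite {μ : α →₀ ℕ // (μ.sum fun _ e => e) = n} := by
    have h : {μ : α →₀ ℕ | (μ.sum fun _ e => e) = n} ⊆ {μ : α →₀ ℕ | μ.degree ≤ n} := by
      intro μ hμ; simp only [Set.mem_setOf_eq] at hμ ⊢; rw [← sum_eq_degree, hμ]
    exact ((Finsupp.finite_of_degree_le n).subset h).to_subtype
  exact Fintype.ofFinite _

noncomputable instance fintypeDegAdd {α : Type*} [Finite α] (a n : ℕ) :
    Fintype {μ : α →₀ ℕ // (μ.sum fun _ e => e) + a = n} := by
  have : Finite {μ : α →₀ ℕ // (μ.sum fun _ e => e) + a = n} := by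
    have h : {μ : α →₀ ℕ | (μ.sum fun _ e => e) + a = n} ⊆ {μ : α →₀ ℕ | μ.degree ≤ n} := by
      intro μ hμ; simp only [Set.mem_setOf_eq] at hμ ⊢; rw [← sum_eq_degree]; omega
    exact ((Finsupp.finite_of_degree_le n).subset h).to_subtype
  exact Fintype.ofFinite _

variable {k : Type*} [Field k]

lemma hom_deg {α : Type*} {p : MvPolynomial α k} {n : ℕ}
    (hp : p.IsHomogeneous n) {v : α →₀ ℕ} (hv : coeff v p ≠ 0) : (v.sum fun _ e => e) = n := by
  have := hp hv
  rw [sum_eq_degree, Finsupp.degree_eq_weight_one]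
  exact this

lemma expand_hom {α : Type*} [Finite α] {p : MvPolynomial α k} {n : ℕ}
    (hp : p.IsHomogeneous n) :
    p = ∑ μ : {μ : α →₀ ℕ // (μ.sum fun _ e => e) = n}, monomial μ.1 (coeff μ.1 p) := by
  classical
  have inj : Function.Injective
      (Subtype.val : {μ : α →₀ ℕ // (μ.sum fun _ e => e) = n} → (α →₀ ℕ)) :=
    Subtype.val_injective
  have h1 : ∑ μ : {μ : α →₀ ℕ // (μ.sum fun _ e => e) = n}, monomial μ.1 (coeff μ.1 p)
      = ∑ v ∈ Finset.univ.map ⟨Subtype.val, inj⟩, monomial v (coeff v p) := by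
    rw [Finset.sum_map]
    rfl
  have hsub : p.support ⊆ Finset.univ.map ⟨Subtype.val, inj⟩ := by
    intro v hv
    simp only [Finset.mem_map, Finset.mem_univ, Function.Embedding.coeFn_mk]
    exact ⟨⟨v, hom_deg hp (mem_support_iff.mp hv)⟩, by simp, rfl⟩
  rw [h1, ← Finset.sum_subset hsub (fun v _ hv => by
    rw [notMem_support_iff.mp hv, monomial_zero])]
  exact as_sum p

lemma coeff_expand {α : Type*} [Finite α] {n : ℕ}
    (x : {μ : α →₀ ℕ // (μ.sum fun _ e => e) = n} → k)
    (κ : {μ : α →₀ ℕ // (μ.sum fun _ e => e) = n}) :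
    coeff κ.1 (∑ μ : {μ : α →₀ ℕ // (μ.sum fun _ e => e) = n}, monomial μ.1 (x μ)) = x κ := by
  classical
  rw [MvPolynomial.coeff_sum]
  rw [Finset.sum_eq_single κ]
  · simp [coeff_monomial]
  · intro b _ hb
    rw [coeff_monomial, if_neg (fun h => hb (Subtype.ext h))]
  · simp

lemma eval_hom_sum {τ : Type*} [Finite τ] {P : MvPolynomial τ k} {s : ℕ}
    (hP : P.IsHomogeneous s) (t : τ → k) :
    eval t P = ∑ μ : {μ : τ →₀ ℕ // (μ.sum fun _ e => e) = s},
      coeff μ.1 P * (μ.1.prod fun i n => t i ^ n) := by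
  conv_lhs => rw [expand_hom hP]
  rw [map_sum]
  exact Finset.sum_congr rfl fun μ _ => eval_monomial

lemma span_top_iff_det {R C : Type*} [Fintype R] [Fintype C] [Nonempty R] [DecidableEq R]
    (M : Matrix R C k) :
    Submodule.span k (Set.range fun p : C => fun r : R => M r p) = ⊤ ↔
      ∃ ι : R → C, (M.submatrix id ι).det ≠ 0 := by
  classical
  constructor
  · intro hspan
    set s : Set (R → k) := Set.range fun p : C => fun r : R => M r p with hs
    have hle : ⊤ ≤ Submodule.span k s := hspan.ge
    set T := (linearIndepOn_empty k id).extend (Set.empty_subset s) with hT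
    haveI : Fintype T := FiniteDimensional.fintypeBasisIndex (Module.Basis.ofSpan hle)
    have hsubT : T ⊆ s := (linearIndepOn_empty k id).extend_subset _
    have hcard : Fintype.card R = Fintype.card T := by
      rw [← Module.finrank_eq_card_basis (Module.Basis.ofSpan hle), Module.finrank_pi]
    let eq : R ≃ T := Fintype.equivOfCardEq hcard
    have hpick : ∀ x : T, ∃ p : C, (fun r : R => M r p) = x.1 := fun x => hsubT x.2
    choose pick hpick using hpick
    refine ⟨fun r => pick (eq r), ?_⟩
    have hmat : M.submatrix id (fun r => pick (eq r)) =
        (Pi.basisFun k R).toMatrix ⇑((Module.Basis.ofSpan hle).reindex eq.symm) := by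
      ext r r'
      have hb : (Module.Basis.ofSpan hle) (eq r') = ((eq r' : T) : R → k) :=
        Module.Basis.ofSpan_apply_self hle (eq r')
      rw [Module.Basis.toMatrix_apply, Pi.basisFun_repr, Module.Basis.reindex_apply, Equiv.symm_symm,
        hb, ← hpick (eq r')]
      rfl
    rw [hmat]
    haveI := (Pi.basisFun k R).invertibleToMatrix ((Module.Basis.ofSpan hle).reindex eq.symm)
    exact (Matrix.isUnit_det_of_invertible _).ne_zero
  · rintro ⟨ι, hdet⟩
    rw [eq_top_iff]
    intro w _
    have hu : IsUnit (M.submatrix id ι).det := isUnit_iff_ne_zero.2 hdet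
    set N := M.submatrix id ι with hN
    have hw : N.mulVec (N⁻¹.mulVec w) = w := by
      rw [Matrix.mulVec_mulVec, Matrix.mul_nonsing_inv _ hu, Matrix.one_mulVec]
    rw [← hw]
    have : N.mulVec (N⁻¹.mulVec w) = ∑ j, (N⁻¹.mulVec w) j • (fun r => N r j) := by
      funext r
      simp [Matrix.mulVec, dotProduct, Finset.sum_apply, mul_comm]
    rw [this]
    exact Submodule.sum_mem _ fun j _ =>
      Submodule.smul_mem _ _ (Submodule.subset_span ⟨ι j, rfl⟩)

theorem elim_exists {σ τ : Type*} [Finite σ] [Finite τ] [Nonempty τ] [IsAlgClosed k]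
    {J : Type*} [Fintype J] (e : J → ℕ) (B : J → (σ → k) → MvPolynomial τ k)
    (hhom : ∀ j c, (B j c).IsHomogeneous (e j))
    (hpoly : ∀ j μ, ∃ q : MvPolynomial σ k, ∀ c, coeff μ (B j c) = eval c q) :
    ∃ I : Set (MvPolynomial σ k), ∀ c : σ → k,
      ((∀ p ∈ I, eval c p = 0) ↔ ∃ t : τ → k, t ≠ 0 ∧ ∀ j, eval t (B j c) = 0) := by
  classical
  choose q hq using hpoly
  haveI := Fintype.ofFinite τ
  haveI : ∀ s : ℕ, Nonempty {μ : τ →₀ ℕ // (μ.sum fun _ e => e) = s} := fun s =>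
    ⟨⟨Finsupp.single (Classical.arbitrary τ) s, by simp [Finsupp.sum_single_index]⟩⟩
  let A : ∀ s : ℕ, Matrix {μ : τ →₀ ℕ // (μ.sum fun _ e => e) = s}
      (Σ j : J, {ν : τ →₀ ℕ // (ν.sum fun _ x => x) + e j = s}) (MvPolynomial σ k) := fun s μ p =>
    if p.2.1 ≤ μ.1 then q p.1 (μ.1 - p.2.1) else 0
  refine ⟨⋃ s : ℕ, Set.range (fun ι : {μ : τ →₀ ℕ // (μ.sum fun _ e => e) = s} →
      (Σ j : J, {ν : τ →₀ ℕ // (ν.sum fun _ x => x) + e j = s}) =>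
      ((A s).submatrix id ι).det), fun c => ?_⟩
  let colv : ∀ s : ℕ, (Σ j : J, {ν : τ →₀ ℕ // (ν.sum fun _ x => x) + e j = s}) →
      ({μ : τ →₀ ℕ // (μ.sum fun _ e => e) = s} → k) := fun s p μ =>
    coeff μ.1 ((monomial p.2.1 1) * B p.1 c)
  have hA : ∀ s μ p, eval c (A s μ p) = colv s p μ := by
    intro s μ p
    show _ = coeff μ.1 ((monomial p.2.1 1) * B p.1 c)
    rw [coeff_monomial_mul']
    by_cases h : p.2.1 ≤ μ.1
    · simp only [A, Matrix.of_apply, if_pos h, hq, one_mul]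
    · simp only [A, Matrix.of_apply, if_neg h, map_zero]
  have hcolv : ∀ s, colv s = fun p μ => ((A s).map (eval c)) μ p := by
    intro s; funext p μ; exact (hA s μ p).symm
  have key1 : (∀ p ∈ (⋃ s : ℕ, Set.range (fun ι : {μ : τ →₀ ℕ // (μ.sum fun _ e => e) = s} →
        (Σ j : J, {ν : τ →₀ ℕ // (ν.sum fun _ x => x) + e j = s}) =>
        ((A s).submatrix id ι).det)), eval c p = 0)
      ↔ ∀ s, Submodule.span k (Set.range (colv s)) ≠ ⊤ := by
    constructor
    · intro h s htop
      rw [hcolv s] at htop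
      obtain ⟨ι, hι⟩ := (span_top_iff_det ((A s).map (eval c))).mp htop
      refine hι ?_
      have h2 := h _ (Set.mem_iUnion.2 ⟨s, Set.mem_range_self ι⟩)
      rw [RingHom.map_det] at h2
      exact h2
    · intro h p hp
      obtain ⟨s, hs⟩ := Set.mem_iUnion.mp hp
      obtain ⟨ι, rfl⟩ := hs
      rw [RingHom.map_det]
      by_contra hne
      refine h s ?_
      rw [hcolv s]
      exact (span_top_iff_det ((A s).map (eval c))).mpr ⟨ι, hne⟩
  rw [key1]
  constructor
  · -- ∀ s span ≠ ⊤ → ∃ t ≠ 0 common zero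
    intro hspan
    by_contra hno
    push_neg at hno
    -- hno : ∀ t, t ≠ 0 → ∃ j, eval t (B j c) ≠ 0
    set Id := Ideal.span (Set.range fun j => B j c) with hId
    have hzl : MvPolynomial.zeroLocus k Id ⊆ {0} := by
      intro x hx
      simp only [Set.mem_singleton_iff]
      by_contra hx0
      obtain ⟨j, hj⟩ := hno x hx0
      exact hj (hx _ (Ideal.subset_span ⟨j, rfl⟩))
    have hrad : ∀ i : τ, X i ∈ Id.radical := by
      intro i
      rw [← MvPolynomial.vanishingIdeal_zeroLocus_eq_radical (K := k)]
      intro x hx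
      have : x = 0 := hzl hx
      subst this
      simp
    choose n hn using fun i => (Ideal.mem_radical_iff.mp (hrad i))
    set N := Finset.univ.sup n with hN
    have hXN : ∀ i : τ, X i ^ N ∈ Id := by
      intro i
      have hle : n i ≤ N := Finset.le_sup (Finset.mem_univ i)
      have : (X i : MvPolynomial τ k) ^ N = X i ^ (N - n i) * X i ^ n i := by
        rw [← pow_add]
        congr 1
        omega
      rw [this]
      exact Ideal.mul_mem_left _ _ (hn i)
    set s := N * Fintype.card τ + 1 with hs
    refine hspan s ?_
    have hmono : ∀ μ : {μ : τ →₀ ℕ // (μ.sum fun _ e => e) = s},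
        (monomial μ.1 (1:k)) ∈ Id := by
      intro μ
      obtain ⟨i, hi⟩ : ∃ i, N ≤ μ.1 i := by
        by_contra hcon
        push_neg at hcon
        have hsum : (μ.1.sum fun _ e => e) = ∑ i : τ, μ.1 i :=
          Finsupp.sum_fintype _ _ (fun _ => rfl)
        have hlt : ∑ i : τ, μ.1 i < ∑ _i : τ, N :=
          Finset.sum_lt_sum_of_nonempty Finset.univ_nonempty (fun i _ => hcon i)
        rw [Finset.sum_const, smul_eq_mul, Finset.card_univ, mul_comm] at hlt
        have h2 := μ.2
        rw [hsum] at h2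
        omega
      have hle : Finsupp.single i N ≤ μ.1 := Finsupp.single_le_iff.mpr hi
      have hfac : monomial μ.1 (1:k) = monomial (μ.1 - Finsupp.single i N) 1 * (X i ^ N) := by
        rw [X_pow_eq_monomial, monomial_mul, one_mul]
        congr 1
        rw [tsub_add_cancel_of_le hle]
      rw [hfac]
      exact Ideal.mul_mem_left _ _ (hXN i)
    rw [eq_top_iff]
    intro w _
    have hw : w = ∑ μ, w μ •
        (Pi.single μ 1 : {μ : τ →₀ ℕ // (μ.sum fun _ e => e) = s} → k) := by
      funext ν
      rw [Finset.sum_apply]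
      rw [Finset.sum_eq_single ν]
      · simp
      · intro b _ hb
        simp [Pi.single_eq_of_ne (Ne.symm hb)]
      · simp
    rw [hw]
    refine Submodule.sum_mem _ fun μ _ => Submodule.smul_mem _ _ ?_
    obtain ⟨h, hh⟩ := (Ideal.mem_span_range_iff_exists_fun).mp (hmono μ)
    set ψ : MvPolynomial τ k →ₗ[k] ({μ : τ →₀ ℕ // (μ.sum fun _ e => e) = s} → k) :=
      LinearMap.pi fun μ' => lcoeff k μ'.1 with hψ
    have hψδ : ψ (monomial μ.1 1) = Pi.single μ 1 := by
      funext μ'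
      show coeff μ'.1 (monomial μ.1 1) = _
      rw [coeff_monomial]
      by_cases hc : μ' = μ
      · subst hc
        simp
      · rw [if_neg (fun hv => hc (Subtype.ext hv.symm)), Pi.single_eq_of_ne hc]
    rw [← hψδ, ← hh, map_sum]
    refine Submodule.sum_mem _ fun j _ => ?_
    have hst : h j * B j c = ∑ ν ∈ (h j).support,
        coeff ν (h j) • ((monomial ν 1) * B j c) := by
      conv_lhs => rw [as_sum (h j), Finset.sum_mul]
      refine Finset.sum_congr rfl fun ν _ => ?_
      rw [← smul_mul_assoc, smul_monomial, smul_eq_mul, mul_one]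
    rw [hst, map_sum]
    refine Submodule.sum_mem _ fun ν _ => ?_
    rw [map_smul]
    refine Submodule.smul_mem _ _ ?_
    by_cases hν : (ν.sum fun _ x => x) + e j = s
    · refine Submodule.subset_span ⟨⟨j, ⟨ν, hν⟩⟩, ?_⟩
      funext μ'
      rfl
    · have h0 : ψ ((monomial ν 1) * B j c) = 0 := by
        funext μ'
        show coeff μ'.1 ((monomial ν (1:k)) * B j c) = 0
        have hp : ((monomial ν (1:k)) * B j c).IsHomogeneous ((ν.sum fun _ x => x) + e j) := by
          have := (isHomogeneous_monomial (1:k) (sum_eq_degree ν).symm).mul (hhom j c)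
          exact this
        refine hp.coeff_eq_zero ?_
        rw [← sum_eq_degree, μ'.2]
        exact fun hv => hν (by simpa using hv.symm)
      rw [h0]
      exact Submodule.zero_mem _
  · -- common zero gives span ≠ ⊤ for all s
    rintro ⟨t, ht0, hz⟩ s htop
    obtain ⟨i0, hi0⟩ : ∃ i0, t i0 ≠ 0 := Function.ne_iff.mp ht0
    set m : {μ : τ →₀ ℕ // (μ.sum fun _ e => e) = s} → k :=
      fun μ => μ.1.prod fun i n => t i ^ n with hm
    set E : ({μ : τ →₀ ℕ // (μ.sum fun _ e => e) = s} → k) →ₗ[k] k :=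
      ∑ μ, (m μ) • LinearMap.proj μ with hEdef
    have hE : ∀ w, E w = ∑ μ, m μ * w μ := by
      intro w
      simp [hEdef, LinearMap.sum_apply, LinearMap.smul_apply, LinearMap.proj_apply, smul_eq_mul]
    have hEcol : ∀ p, E (colv s p) = 0 := by
      intro p
      have hp : ((monomial p.2.1 (1:k)) * B p.1 c).IsHomogeneous s := by
        have := (isHomogeneous_monomial (1:k) (sum_eq_degree p.2.1).symm).mul (hhom p.1 c)
        rwa [p.2.2] at this
      rw [hE]
      have h2 : (∑ μ, m μ * colv s p μ) = eval t ((monomial p.2.1 1) * B p.1 c) := by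
        rw [eval_hom_sum hp t]
        exact Finset.sum_congr rfl fun μ _ => mul_comm _ _
      rw [h2, map_mul, hz p.1, mul_zero]
    set μ0 : {μ : τ →₀ ℕ // (μ.sum fun _ e => e) = s} :=
      ⟨Finsupp.single i0 s, by simp [Finsupp.sum_single_index]⟩ with hμ0
    have hδ : Pi.single μ0 (1:k) ∈ Submodule.span k (Set.range (colv s)) :=
      htop ▸ Submodule.mem_top
    obtain ⟨x, hx⟩ := (Submodule.mem_span_range_iff_exists_fun k).mp hδ
    have hEδ : E (Pi.single μ0 (1:k)) = 0 := by
      rw [← hx, map_sum]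
      simp only [map_smul, hEcol, smul_zero, Finset.sum_const_zero]
    have hEδ' : E (Pi.single μ0 (1:k)) = t i0 ^ s := by
      rw [hE]
      rw [Finset.sum_eq_single μ0]
      · simp only [Pi.single_eq_same, mul_one, hm, hμ0]
        exact Finsupp.prod_single_index (pow_zero _)
      · intro b _ hb
        rw [Pi.single_eq_of_ne hb, mul_zero]
      · simp
    exact pow_ne_zero s hi0 (hEδ' ▸ hEδ)


-- σ'' × σ' product coefficient lemma
lemma coeff_mul_expand {d : ℕ} (a : {μ : Fin 3 →₀ ℕ // (μ.sum fun _ e => e) = 1} → k)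
    (gv : {ν : Fin 3 →₀ ℕ // (ν.sum fun _ e => e) = d - 1} → k)
    (κ : {μ : Fin 3 →₀ ℕ // (μ.sum fun _ e => e) = d}) :
    coeff κ.1 ((∑ α, monomial α.1 (a α)) * (∑ ν, monomial ν.1 (gv ν)))
      = ∑ p ∈ Finset.univ.filter
          (fun p : {μ : Fin 3 →₀ ℕ // (μ.sum fun _ e => e) = 1} ×
            {ν : Fin 3 →₀ ℕ // (ν.sum fun _ e => e) = d - 1} => p.1.1 + p.2.1 = κ.1),
          a p.1 * gv p.2 := by
  classical
  rw [Finset.sum_mul_sum]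
  simp only [monomial_mul]
  rw [MvPolynomial.coeff_sum]
  simp only [MvPolynomial.coeff_sum, coeff_monomial]
  rw [Finset.sum_filter]
  have hpt := Fintype.sum_prod_type (f := fun p : {μ : Fin 3 →₀ ℕ // (μ.sum fun _ e => e) = 1} ×
      {ν : Fin 3 →₀ ℕ // (ν.sum fun _ e => e) = d - 1} =>
    if p.1.1 + p.2.1 = κ.1 then a p.1 * gv p.2 else 0)
  rw [hpt]


abbrev Sub3 (n : ℕ) := {μ : Fin 3 →₀ ℕ // (μ.sum fun _ e => e) = n}

noncomputable def MM (d : ℕ) (κ : Sub3 d) : MvPolynomial (Sub3 1 × Sub3 (d-1)) k :=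
  ∑ p ∈ Finset.univ.filter (fun p : Sub3 1 × Sub3 (d-1) => p.1.1 + p.2.1 = κ.1), X p

lemma MM_hom (d : ℕ) (κ : Sub3 d) : (MM (k := k) d κ).IsHomogeneous 1 :=
  IsHomogeneous.sum _ _ _ fun p _ => isHomogeneous_X _ _

lemma eval_MM (d : ℕ) (κ : Sub3 d) (t : Sub3 1 × Sub3 (d-1) → k) :
    eval t (MM d κ) = ∑ p ∈ Finset.univ.filter
      (fun p : Sub3 1 × Sub3 (d-1) => p.1.1 + p.2.1 = κ.1), t p := by
  rw [MM, map_sum]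
  exact Finset.sum_congr rfl fun p _ => eval_X _

theorem part1 [IsAlgClosed k] (d : ℕ) (hd : 2 ≤ d) :
    ∃ I : Set (MvPolynomial (Sub3 d) k),
      ∀ c : Sub3 d → k,
        ((∀ p ∈ I, eval c p = 0) ↔
          ∃ ℓ g : MvPolynomial (Fin 3) k, ℓ.IsHomogeneous 1 ∧ g.IsHomogeneous (d - 1) ∧
            (∑ κ, monomial κ.1 (c κ)) = ℓ * g) := by
  classical
  haveI : Nonempty (Sub3 1 × Sub3 (d-1)) :=
    ⟨⟨⟨Finsupp.single 0 1, by simp [Finsupp.sum_single_index]⟩,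
      ⟨Finsupp.single 0 (d-1), Finsupp.sum_single_index rfl⟩⟩⟩
  obtain ⟨I, hI⟩ := elim_exists (k := k) (σ := Sub3 d) (τ := Sub3 1 × Sub3 (d-1))
    (J := ((Sub3 1 × Sub3 (d-1)) × (Sub3 1 × Sub3 (d-1))) ⊕ (Sub3 d × Sub3 d))
    (Sum.elim (fun _ => 2) (fun _ => 1))
    (fun j c => match j with
      | Sum.inl (p, p') => X p * X p' - X (p.1, p'.2) * X (p'.1, p.2)
      | Sum.inr (κ, lam) => C (c lam) * MM d κ - C (c κ) * MM d lam)
    (by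
      rintro (⟨p, p'⟩ | ⟨κ, lam⟩) c
      · show (X p * X p' - X (p.1, p'.2) * X (p'.1, p.2) :
          MvPolynomial (Sub3 1 × Sub3 (d-1)) k).IsHomogeneous 2
        have h1 := (isHomogeneous_X k p).mul (isHomogeneous_X k p')
        have h2 := (isHomogeneous_X k (p.1, p'.2)).mul (isHomogeneous_X k (p'.1, p.2))
        exact h1.sub h2
      · show (C (c lam) * MM d κ - C (c κ) * MM d lam :
          MvPolynomial (Sub3 1 × Sub3 (d-1)) k).IsHomogeneous 1
        exact ((MM_hom d κ).C_mul _).sub ((MM_hom d lam).C_mul _))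
    (by
      rintro (⟨p, p'⟩ | ⟨κ, lam⟩) μ
      · exact ⟨C (coeff μ (X p * X p' - X (p.1, p'.2) * X (p'.1, p.2))),
          fun c => (eval_C _).symm⟩
      · refine ⟨C (coeff μ (MM d κ)) * X lam - C (coeff μ (MM d lam)) * X κ, fun c => ?_⟩
        show coeff μ (C (c lam) * MM d κ - C (c κ) * MM d lam) = _
        rw [coeff_sub, coeff_C_mul, coeff_C_mul]
        simp [mul_comm])
  refine ⟨I, fun c => (hI c).trans ?_⟩
  constructor
  · -- system solution → factorization
    rintro ⟨t, ht0, hsys⟩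
    have hS : ∀ p p' : Sub3 1 × Sub3 (d-1), t p * t p' = t (p.1, p'.2) * t (p'.1, p.2) := by
      intro p p'
      have h := hsys (Sum.inl (p, p'))
      simp only [map_sub, map_mul, eval_X] at h
      rwa [sub_eq_zero] at h
    have hP : ∀ κ lam : Sub3 d,
        c lam * (∑ p ∈ Finset.univ.filter
          (fun p : Sub3 1 × Sub3 (d-1) => p.1.1 + p.2.1 = κ.1), t p)
        = c κ * (∑ p ∈ Finset.univ.filter
          (fun p : Sub3 1 × Sub3 (d-1) => p.1.1 + p.2.1 = lam.1), t p) := by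
      intro κ lam
      have h := hsys (Sum.inr (κ, lam))
      simp only [map_sub, map_mul, eval_C, eval_MM] at h
      rwa [sub_eq_zero] at h
    obtain ⟨p0, hp0⟩ : ∃ p0, t p0 ≠ 0 := Function.ne_iff.mp ht0
    set a : Sub3 1 → k := fun α => t (α, p0.2) with ha
    set gv : Sub3 (d-1) → k := fun ν => t (p0.1, ν) * (t p0)⁻¹ with hgv
    have hag : ∀ p : Sub3 1 × Sub3 (d-1), a p.1 * gv p.2 = t p := by
      intro p
      have key : t (p.1, p0.2) * t (p0.1, p.2) = t p * t p0 := hS (p.1, p0.2) (p0.1, p.2)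
      calc a p.1 * gv p.2 = (t (p.1, p0.2) * t (p0.1, p.2)) * (t p0)⁻¹ := by
            rw [ha, hgv]; ring
        _ = (t p * t p0) * (t p0)⁻¹ := by rw [key]
        _ = t p := by field_simp
    set L : MvPolynomial (Fin 3) k := ∑ α : Sub3 1, monomial α.1 (a α) with hL
    set G : MvPolynomial (Fin 3) k := ∑ ν : Sub3 (d-1), monomial ν.1 (gv ν) with hG
    have hLhom : L.IsHomogeneous 1 :=
      IsHomogeneous.sum _ _ _ fun α _ =>
        isHomogeneous_monomial _ (by rw [← sum_eq_degree]; exact α.2)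
    have hGhom : G.IsHomogeneous (d-1) :=
      IsHomogeneous.sum _ _ _ fun ν _ =>
        isHomogeneous_monomial _ (by rw [← sum_eq_degree]; exact ν.2)
    have hw : ∀ κ : Sub3 d, coeff κ.1 (L * G) = ∑ p ∈ Finset.univ.filter
        (fun p : Sub3 1 × Sub3 (d-1) => p.1.1 + p.2.1 = κ.1), t p := by
      intro κ
      rw [hL, hG, coeff_mul_expand]
      exact Finset.sum_congr rfl fun p _ => hag p
    have hLGhom : (L * G).IsHomogeneous d := by
      have h := hLhom.mul hGhom
      rwa [show 1 + (d - 1) = d by omega] at h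
    have hLne : L ≠ 0 := by
      intro h0
      have h1 : coeff p0.1.1 L = a p0.1 := coeff_expand a p0.1
      rw [h0, coeff_zero] at h1
      exact hp0 (by rw [← hag p0]; rw [← h1]; ring)
    have hGne : G ≠ 0 := by
      intro h0
      have h1 : coeff p0.2.1 G = gv p0.2 := coeff_expand gv p0.2
      rw [h0, coeff_zero] at h1
      have : gv p0.2 = 1 := by rw [hgv]; field_simp
      rw [this] at h1
      exact one_ne_zero h1.symm
    have hLGne : L * G ≠ 0 := mul_ne_zero hLne hGne
    obtain ⟨μw, hμw⟩ := MvPolynomial.ne_zero_iff.mp hLGne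
    have hκ0 : (μw.sum fun _ e => e) = d := hom_deg hLGhom hμw
    set κ0 : Sub3 d := ⟨μw, hκ0⟩ with hκ0def
    have hwκ0 : coeff κ0.1 (L * G) ≠ 0 := hμw
    set u := c κ0 * (coeff κ0.1 (L * G))⁻¹ with hu
    have hcu : ∀ κ, c κ = u * coeff κ.1 (L * G) := by
      intro κ
      have h1 := hP κ κ0
      rw [← hw κ, ← hw κ0] at h1
      -- h1 : c κ0 * coeff κ (L*G) = c κ * coeff κ0 (L*G)
      have hcoe : (κ0 : Fin 3 →₀ ℕ) = μw := rfl
      rw [hcoe] at h1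
      rw [hu, hcoe]
      field_simp
      linear_combination -h1
    refine ⟨C u * L, G, hLhom.C_mul _, hGhom, ?_⟩
    calc (∑ κ : Sub3 d, monomial κ.1 (c κ))
        = ∑ κ : Sub3 d, monomial κ.1 (u * coeff κ.1 (L * G)) :=
          Finset.sum_congr rfl fun κ _ => by rw [hcu κ]
      _ = ∑ κ : Sub3 d, C u * monomial κ.1 (coeff κ.1 (L * G)) :=
          Finset.sum_congr rfl fun κ _ => (C_mul_monomial).symm
      _ = C u * ∑ κ : Sub3 d, monomial κ.1 (coeff κ.1 (L * G)) :=
          (Finset.mul_sum _ _ _).symm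
      _ = C u * (L * G) := by rw [← expand_hom hLGhom]
      _ = (C u * L) * G := (mul_assoc _ _ _).symm
  · -- factorization → system solution
    rintro ⟨ℓ, g, hl, hg, heq⟩
    by_cases hc : c = 0
    · subst hc
      set α0 : Sub3 1 := ⟨Finsupp.single 0 1, by simp [Finsupp.sum_single_index]⟩ with hα0
      set ν0 : Sub3 (d-1) := ⟨Finsupp.single 0 (d-1), Finsupp.sum_single_index rfl⟩ with hν0
      refine ⟨fun p => (if p.1 = α0 then (1:k) else 0) * (if p.2 = ν0 then 1 else 0), ?_, ?_⟩
      · rw [Function.ne_iff]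
        exact ⟨(α0, ν0), by simp⟩
      · rintro (⟨p, p'⟩ | ⟨κ, lam⟩)
        · show eval _ (X p * X p' - X (p.1, p'.2) * X (p'.1, p.2)) = 0
          simp only [map_sub, map_mul, eval_X]
          ring
        · show eval _ (C ((0 : Sub3 d → k) lam) * MM d κ
              - C ((0 : Sub3 d → k) κ) * MM d lam) = 0
          simp
    · have hcf : (∑ κ : Sub3 d, monomial κ.1 (c κ)) ≠ 0 := by
        intro h0
        apply hc
        funext κ
        have h1 := coeff_expand c κ
        rw [h0, coeff_zero] at h1
        exact h1.symm
      have hlne : ℓ ≠ 0 := fun h => hcf (by rw [heq, h, zero_mul])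
      have hgne : g ≠ 0 := fun h => hcf (by rw [heq, h, mul_zero])
      set a : Sub3 1 → k := fun α => coeff α.1 ℓ with ha
      set gv : Sub3 (d-1) → k := fun ν => coeff ν.1 g with hgv
      have hLexp : ℓ = ∑ α : Sub3 1, monomial α.1 (a α) := expand_hom hl
      have hGexp : g = ∑ ν : Sub3 (d-1), monomial ν.1 (gv ν) := expand_hom hg
      obtain ⟨α1, hα1⟩ : ∃ α, a α ≠ 0 := by
        by_contra hcon
        push_neg at hcon
        apply hlne
        rw [hLexp]
        simp [hcon]
      obtain ⟨ν1, hν1⟩ : ∃ ν, gv ν ≠ 0 := by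
        by_contra hcon
        push_neg at hcon
        apply hgne
        rw [hGexp]
        simp [hcon]
      have hm : ∀ κ : Sub3 d, (∑ p ∈ Finset.univ.filter
          (fun p : Sub3 1 × Sub3 (d-1) => p.1.1 + p.2.1 = κ.1), a p.1 * gv p.2) = c κ := by
        intro κ
        rw [← coeff_mul_expand a gv κ, ← hLexp, ← hGexp, ← heq, coeff_expand]
      refine ⟨fun p => a p.1 * gv p.2, ?_, ?_⟩
      · rw [Function.ne_iff]
        refine ⟨(α1, ν1), ?_⟩
        simp only [Pi.zero_apply]
        exact mul_ne_zero hα1 hν1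
      · rintro (⟨p, p'⟩ | ⟨κ, lam⟩)
        · show eval _ (X p * X p' - X (p.1, p'.2) * X (p'.1, p.2)) = 0
          simp only [map_sub, map_mul, eval_X]
          ring
        · show eval _ (C (c lam) * MM d κ - C (c κ) * MM d lam) = 0
          simp only [map_sub, map_mul, eval_C, eval_MM]
          rw [hm, hm]
          ring



lemma deg_one_single {α : Type*} [DecidableEq α] (μ : α →₀ ℕ)
    (h : (μ.sum fun _ e => e) = 1) : ∃ i, μ = Finsupp.single i 1 := by
  have hsum : ∑ a ∈ μ.support, μ a = 1 := h
  have hcard : μ.support.card ≤ 1 := by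
    by_contra hc
    push_neg at hc
    obtain ⟨x, hx, y, hy, hxy⟩ := Finset.one_lt_card.mp hc
    have hsub : {x, y} ⊆ μ.support := by
      intro z hz
      rcases Finset.mem_insert.mp hz with rfl | hz
      · exact hx
      · exact (Finset.mem_singleton.mp hz) ▸ hy
    have hle : ∑ a ∈ ({x, y} : Finset α), μ a ≤ ∑ a ∈ μ.support, μ a :=
      Finset.sum_le_sum_of_subset hsub
    rw [Finset.sum_pair hxy, hsum] at hle
    have hx1 : 1 ≤ μ x := Nat.one_le_iff_ne_zero.mpr (Finsupp.mem_support_iff.mp hx)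
    have hy1 : 1 ≤ μ y := Nat.one_le_iff_ne_zero.mpr (Finsupp.mem_support_iff.mp hy)
    omega
  have hne : μ.support.Nonempty := by
    by_contra hn
    rw [Finset.not_nonempty_iff_eq_empty] at hn
    rw [hn, Finset.sum_empty] at hsum
    exact one_ne_zero hsum.symm
  obtain ⟨i, hi⟩ := Finset.card_eq_one.mp (le_antisymm hcard hne.card_pos)
  have hμi : μ i = 1 := by
    rw [hi, Finset.sum_singleton] at hsum
    exact hsum
  refine ⟨i, ?_⟩
  ext a
  rcases eq_or_ne a i with rfl | hne'
  · rw [hμi, Finsupp.single_eq_same]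
  · rw [Finsupp.single_eq_of_ne' (Ne.symm hne')]
    by_contra ha
    have : a ∈ μ.support := Finsupp.mem_support_iff.mpr ha
    rw [hi, Finset.mem_singleton] at this
    exact hne' this

lemma lin_expand {ℓ : MvPolynomial (Fin 3) k} (hl : ℓ.IsHomogeneous 1) :
    ℓ = C (coeff (Finsupp.single 0 1) ℓ) * X 0 + C (coeff (Finsupp.single 1 1) ℓ) * X 1
      + C (coeff (Finsupp.single 2 1) ℓ) * X 2 := by
  classical
  let e : Fin 3 → Sub3 1 := fun i => ⟨Finsupp.single i 1, Finsupp.sum_single_index rfl⟩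
  have hbij : Function.Bijective e := by
    constructor
    · intro i j hij
      have := congrArg Subtype.val hij
      exact Finsupp.single_left_injective one_ne_zero this
    · intro α
      obtain ⟨i, hi⟩ := deg_one_single α.1 α.2
      exact ⟨i, Subtype.ext hi.symm⟩
  have hsum : ∑ α : Sub3 1, monomial α.1 (coeff α.1 ℓ)
      = ∑ i : Fin 3, monomial (Finsupp.single i 1) (coeff (Finsupp.single i 1) ℓ) :=
    (Function.Bijective.sum_comp hbij _).symm
  have hX : ∀ i : Fin 3, monomial (Finsupp.single i 1) (coeff (Finsupp.single i 1) ℓ)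
      = C (coeff (Finsupp.single i 1) ℓ) * X i := by
    intro i
    rw [X, C_mul_monomial, mul_one]
  calc ℓ = ∑ α : Sub3 1, monomial α.1 (coeff α.1 ℓ) := expand_hom hl
    _ = ∑ i : Fin 3, monomial (Finsupp.single i 1) (coeff (Finsupp.single i 1) ℓ) := hsum
    _ = _ := by rw [Fin.sum_univ_three, hX 0, hX 1, hX 2]

theorem part2 (d : ℕ) (hd : 2 ≤ d) :
    ∃ f : MvPolynomial (Fin 3) k, f.IsHomogeneous d ∧
      ¬ ∃ ℓ g : MvPolynomial (Fin 3) k, ℓ.IsHomogeneous 1 ∧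
        g.IsHomogeneous (d - 1) ∧ f = ℓ * g := by
  classical
  refine ⟨X 2 ^ d + X 0 ^ (d-1) * X 1, ?_, ?_⟩
  · have h1 : ((X 2 : MvPolynomial (Fin 3) k) ^ d).IsHomogeneous d := isHomogeneous_X_pow _ _
    have h2 : ((X 0 : MvPolynomial (Fin 3) k) ^ (d-1) * X 1).IsHomogeneous d := by
      have := (isHomogeneous_X_pow (R := k) (0 : Fin 3) (d - 1)).mul (isHomogeneous_X k 1)
      rwa [show d - 1 + 1 = d by omega] at this
    exact h1.add h2
  · rintro ⟨ℓ, g, hl, hg, heq⟩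
    set a0 := coeff (Finsupp.single 0 1) ℓ with ha0
    set a1 := coeff (Finsupp.single 1 1) ℓ with ha1
    set a2 := coeff (Finsupp.single 2 1) ℓ with ha2
    have hexp := lin_expand hl
    have hev : ∀ v : Fin 3 → k, eval v ℓ = a0 * v 0 + a1 * v 1 + a2 * v 2 := by
      intro v
      conv_lhs => rw [hexp]
      simp
      rfl
    have hzero : ∀ v : Fin 3 → k, eval v ℓ = 0 → v 2 ^ d + v 0 ^ (d-1) * v 1 = 0 := by
      intro v hv
      have h := congrArg (eval v) heq
      rw [map_mul, hv, zero_mul] at h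
      simpa using h
    by_cases hb1 : a1 ≠ 0
    · set v : Fin 3 → k := fun i => if i = 1 then -a2 / a1 else if i = 2 then 1 else 0 with hvd
      have hv0 : v 0 = 0 := rfl
      have hv1 : v 1 = -a2 / a1 := rfl
      have hv2 : v 2 = 1 := rfl
      have hvz : eval v ℓ = 0 := by
        rw [hev, hv0, hv1, hv2]
        field_simp
        ring
      have := hzero v hvz
      rw [hv0, hv1, hv2, one_pow, zero_pow (show d - 1 ≠ 0 by omega), zero_mul, add_zero] at this
      exact one_ne_zero this
    · push_neg at hb1
      by_cases hb2 : a2 ≠ 0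
      · set x := -a0 / a2 with hx
        set v : Fin 3 → k := fun i => if i = 0 then 1 else if i = 1 then 1 - x ^ d else x with hvd
        have hv0 : v 0 = 1 := rfl
        have hv1 : v 1 = 1 - x ^ d := rfl
        have hv2 : v 2 = x := rfl
        have hvz : eval v ℓ = 0 := by
          rw [hev, hv0, hv1, hv2, hb1, hx]
          field_simp
          ring
        have h := hzero v hvz
        rw [hv0, hv1, hv2, one_pow] at h
        have : (1 : k) = 0 := by linear_combination h
        exact one_ne_zero this
      · push_neg at hb2
        by_cases hb0 : a0 ≠ 0
        · set v : Fin 3 → k := fun i => if i = 2 then 1 else 0 with hvd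
          have hv0 : v 0 = 0 := rfl
          have hv1 : v 1 = 0 := rfl
          have hv2 : v 2 = 1 := rfl
          have hvz : eval v ℓ = 0 := by
            rw [hev, hv0, hv1, hv2, hb1, hb2]
            ring
          have h := hzero v hvz
          rw [hv0, hv1, hv2, one_pow, zero_pow (show d - 1 ≠ 0 by omega), zero_mul, add_zero] at h
          exact one_ne_zero h
        · push_neg at hb0
          have hl0 : ℓ = 0 := by
            rw [hexp, ← ha0, ← ha1, ← ha2, hb0, hb1, hb2]
            simp
          have hf0 : (X 2 ^ d + X 0 ^ (d-1) * X 1 : MvPolynomial (Fin 3) k) = 0 := by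
            rw [heq, hl0, zero_mul]
          have hco := congrArg (coeff (Finsupp.single 2 d)) hf0
          rw [coeff_add, coeff_zero] at hco
          have hc1 : coeff (Finsupp.single 2 d) ((X 2 : MvPolynomial (Fin 3) k) ^ d) = 1 := by
            rw [X_pow_eq_monomial, coeff_monomial, if_pos rfl]
          have hc2 : coeff (Finsupp.single 2 d)
              ((X 0 : MvPolynomial (Fin 3) k) ^ (d-1) * X 1) = 0 := by
            rw [X_pow_eq_monomial, X, monomial_mul, coeff_monomial, mul_one]
            rw [if_neg]
            intro hcon
            have := congrFun (congrArg (fun m : Fin 3 →₀ ℕ => (m : Fin 3 → ℕ)) hcon) 1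
            simp [Finsupp.single_apply] at this
          rw [hc1, hc2, add_zero] at hco
          exact one_ne_zero hco


end SliceAux

/-- A general degree-`d` form in three variables (`d ≥ 2`) has slice rank exactly 2:
the set of degree-`d` forms of the shape `ℓ·g` with `ℓ` linear is a proper Zariski-closed
subset of the space of all degree-`d` forms (closedness is expressed by cutting the set
out, inside the degree-`d` forms, by polynomial equations in the coefficients). -/
theorem stmt_4 {k : Type*} [Field k] [IsAlgClosed k] (d : ℕ) (hd : 2 ≤ d) :
    (∃ I : Set (MvPolynomial {μ : Fin 3 →₀ ℕ // (μ.sum fun _ e => e) = d} k),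
      {f : MvPolynomial (Fin 3) k | f.IsHomogeneous d ∧
          ∃ ℓ g : MvPolynomial (Fin 3) k, ℓ.IsHomogeneous 1 ∧
            g.IsHomogeneous (d - 1) ∧ f = ℓ * g}
        = {f : MvPolynomial (Fin 3) k | f.IsHomogeneous d ∧
            ∀ p ∈ I, eval (fun μ => f.coeff μ.1) p = 0}) ∧
    (∃ f : MvPolynomial (Fin 3) k, f.IsHomogeneous d ∧
      ¬ ∃ ℓ g : MvPolynomial (Fin 3) k, ℓ.IsHomogeneous 1 ∧
        g.IsHomogeneous (d - 1) ∧ f = ℓ * g) := by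
  constructor
  · obtain ⟨I, hI⟩ := SliceAux.part1 (k := k) d hd
    refine ⟨I, ?_⟩
    ext f
    simp only [Set.mem_setOf_eq]
    constructor
    · rintro ⟨hf, ℓ, g, h1, h2, h3⟩
      refine ⟨hf, ?_⟩
      refine (hI (fun μ => f.coeff μ.1)).mpr ⟨ℓ, g, h1, h2, ?_⟩
      rw [← h3]
      exact (SliceAux.expand_hom hf).symm
    · rintro ⟨hf, hvan⟩
      refine ⟨hf, ?_⟩
      obtain ⟨ℓ, g, h1, h2, h3⟩ := (hI (fun μ => f.coeff μ.1)).mp hvan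
      exact ⟨ℓ, g, h1, h2, (SliceAux.expand_hom hf).trans h3⟩
  · exact SliceAux.part2 d hd
end

section
/- If a homogeneous polynomial u of degree d over ℝ has complex strength s (a decomposition u = Σ_{h=1}^s f_h g_h with f_h, g_h homogeneous over ℂ of positive degree), then u has real strength at most 2s: u admits a decomposition with 2s terms in which all factors have real coefficients. -/
open MvPolynomial

noncomputable def rePoly {σ : Type*} (p : MvPolynomial σ ℂ) : MvPolynomial σ ℝ :=
  AddMonoidAlgebra.ofCoeff (Finsupp.mapRange Complex.re Complex.zero_re (AddMonoidAlgebra.coeff p))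

noncomputable def imPoly {σ : Type*} (p : MvPolynomial σ ℂ) : MvPolynomial σ ℝ :=
  AddMonoidAlgebra.ofCoeff (Finsupp.mapRange Complex.im Complex.zero_im (AddMonoidAlgebra.coeff p))

lemma coeff_rePoly {σ : Type*} (m : σ →₀ ℕ) (p : MvPolynomial σ ℂ) :
    coeff m (rePoly p) = (coeff m p).re := rfl

lemma coeff_imPoly {σ : Type*} (m : σ →₀ ℕ) (p : MvPolynomial σ ℂ) :
    coeff m (imPoly p) = (coeff m p).im := rfl

lemma rePoly_isHomogeneous {σ : Type*} {p : MvPolynomial σ ℂ} {k : ℕ}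
    (hp : p.IsHomogeneous k) : (rePoly p).IsHomogeneous k := by
  intro m hm
  exact hp (fun h => hm (by rw [coeff_rePoly, h, Complex.zero_re]))

lemma imPoly_isHomogeneous {σ : Type*} {p : MvPolynomial σ ℂ} {k : ℕ}
    (hp : p.IsHomogeneous k) : (imPoly p).IsHomogeneous k := by
  intro m hm
  exact hp (fun h => hm (by rw [coeff_imPoly, h, Complex.zero_im]))

lemma rePoly_add_imPoly {σ : Type*} (p : MvPolynomial σ ℂ) :
    p = map (algebraMap ℝ ℂ) (rePoly p) +
      C Complex.I * map (algebraMap ℝ ℂ) (imPoly p) := by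
  ext m
  simp only [coeff_add, coeff_map, coeff_C_mul, coeff_rePoly, coeff_imPoly]
  simp [Complex.ext_iff]

lemma eq_zero_of_map_eq_I_mul {σ : Type*} (v w : MvPolynomial σ ℝ)
    (h : map (algebraMap ℝ ℂ) v = C Complex.I * map (algebraMap ℝ ℂ) w) : v = 0 := by
  ext m
  have h2 := congrArg (coeff m) h
  simp only [coeff_map, coeff_C_mul] at h2
  have := congrArg Complex.re h2
  simpa using this

/-- If a real degree-`d` form `u` has a complex strength decomposition with `s` summands,
then it has a real strength decomposition with `2s` summands. -/
theorem stmt_7 (n d s : ℕ) (u : MvPolynomial (Fin n) ℝ) (hu : u.IsHomogeneous d)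
    (e : Fin s → ℕ) (f g : Fin s → MvPolynomial (Fin n) ℂ)
    (hfg : ∀ i, 0 < e i ∧ e i < d ∧ (f i).IsHomogeneous (e i) ∧
      (g i).IsHomogeneous (d - e i))
    (hdec : MvPolynomial.map (algebraMap ℝ ℂ) u = ∑ i, f i * g i) :
    ∃ (e' : Fin (2 * s) → ℕ) (p q : Fin (2 * s) → MvPolynomial (Fin n) ℝ),
      (∀ i, 0 < e' i ∧ e' i < d ∧ (p i).IsHomogeneous (e' i) ∧
        (q i).IsHomogeneous (d - e' i)) ∧
      u = ∑ i, p i * q i := by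
  set A : Fin s → MvPolynomial (Fin n) ℝ := fun i => rePoly (f i) with hA
  set B : Fin s → MvPolynomial (Fin n) ℝ := fun i => imPoly (f i) with hB
  set Cc : Fin s → MvPolynomial (Fin n) ℝ := fun i => rePoly (g i) with hCc
  set D : Fin s → MvPolynomial (Fin n) ℝ := fun i => imPoly (g i) with hD
  set X : MvPolynomial (Fin n) ℝ := ∑ i, (A i * Cc i - B i * D i) with hX
  set Y : MvPolynomial (Fin n) ℝ := ∑ i, (A i * D i + B i * Cc i) with hY
  have key : map (algebraMap ℝ ℂ) (u - X) = C Complex.I * map (algebraMap ℝ ℂ) Y := by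
    have hmapX : map (algebraMap ℝ ℂ) u
        = map (algebraMap ℝ ℂ) X + C Complex.I * map (algebraMap ℝ ℂ) Y := by
      rw [hdec, hX, hY, map_sum, map_sum, Finset.mul_sum, ← Finset.sum_add_distrib]
      refine Finset.sum_congr rfl fun i _ => ?_
      rw [rePoly_add_imPoly (f i), rePoly_add_imPoly (g i)]
      have hI : (C Complex.I : MvPolynomial (Fin n) ℂ) * C Complex.I = -1 := by
        rw [← C_mul, Complex.I_mul_I, map_neg, map_one]
      push_cast [map_sub, map_add, map_mul]
      ring_nf
      rw [show (C Complex.I : MvPolynomial (Fin n) ℂ) ^ 2 = -1 by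
        rw [sq]; exact hI]
      ring
    rw [map_sub, hmapX]; ring
  have huX : u = X := by
    have := eq_zero_of_map_eq_I_mul _ _ key
    linear_combination this
  -- index juggling
  let E : Fin (2 * s) ≃ Fin s ⊕ Fin s := (finCongr (two_mul s)).trans finSumFinEquiv.symm
  refine ⟨Sum.elim e e ∘ E, Sum.elim A B ∘ E, Sum.elim Cc (fun i => -(D i)) ∘ E, ?_, ?_⟩
  · intro i
    rcases hE : E i with j | j <;> simp only [Function.comp_apply, hE, Sum.elim_inl, Sum.elim_inr]
    · exact ⟨(hfg j).1, (hfg j).2.1, rePoly_isHomogeneous (hfg j).2.2.1,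
        rePoly_isHomogeneous (hfg j).2.2.2⟩
    · exact ⟨(hfg j).1, (hfg j).2.1, imPoly_isHomogeneous (hfg j).2.2.1,
        (imPoly_isHomogeneous (hfg j).2.2.2).neg⟩
  · rw [huX, hX]
    rw [← Equiv.sum_comp E.symm (fun i => (Sum.elim A B ∘ E) i *
      (Sum.elim Cc (fun i => -(D i)) ∘ E) i)]
    simp only [Function.comp_apply, Equiv.apply_symm_apply]
    rw [Fintype.sum_sum_type]
    simp only [Sum.elim_inl, Sum.elim_inr]
    rw [← Finset.sum_add_distrib]
    exact Finset.sum_congr rfl fun i _ => by ring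
end

section
/- Let S be a smooth projective surface with Pic(S) ≅ ℤ², freely generated by classes [A], [B] with A an integral curve with A² < 0 and B ample. If E ⊂ S is an integral curve with E² < 0 and E ≠ A, then [A] and [E] form a basis of Pic(S) ⊗ ℚ, and the effective cone of Pic(S) ⊗ ℚ equals { h[A] + ℓ[E] : h, ℓ ∈ ℚ≥0 }. -/
/-- Abstract form of Proposition (effective cone of a surface with `Pic ≅ ℤ²`):
`V = Pic(S) ⊗ ℚ` with intersection form `b`; the effective cone `Eff` is the set of
nonnegative combinations of classes of integral curves (`cls : ι → V`), distinct integral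
curves meet nonnegatively, `A, B` is a basis with `A` an integral curve with `A² < 0` and
`B` an ample effective class, and `E ≠ A` is an integral curve with `E² < 0`.  Then
`[A], [E]` form a basis of `Pic(S) ⊗ ℚ` and the effective cone equals
`{ h·A + ℓ·E : h, ℓ ≥ 0 }`. -/
theorem stmt_14 {V : Type*} [AddCommGroup V] [Module ℚ V]
    (b : V →ₗ[ℚ] V →ₗ[ℚ] ℚ) (hsymm : ∀ x y, b x y = b y x)
    {ι : Type*} (cls : ι → V)
    (hmeet : ∀ i j : ι, cls i ≠ cls j → 0 ≤ b (cls i) (cls j))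
    (Eff : Set V)
    (hEff : Eff = {x | ∃ (s : Finset ι) (c : ι → ℚ),
      (∀ i, 0 ≤ c i) ∧ x = ∑ i ∈ s, c i • cls i})
    (A B E : V) (iA iE iB : ι) (hA : cls iA = A) (hE : cls iE = E) (hB : cls iB = B)
    (hbasis : LinearIndependent ℚ ![A, B] ∧ Submodule.span ℚ {A, B} = ⊤)
    (hA2 : b A A < 0) (hE2 : b E E < 0) (hAE : A ≠ E)
    (hample : ∀ i : ι, 0 < b B (cls i)) :
    (LinearIndependent ℚ ![A, E] ∧ Submodule.span ℚ {A, E} = ⊤) ∧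
    Eff = {x | ∃ h ℓ : ℚ, 0 ≤ h ∧ 0 ≤ ℓ ∧ x = h • A + ℓ • E} := by
  classical
  obtain ⟨hABind, hABspan⟩ := hbasis
  -- basic intersection numbers
  have hm : 0 ≤ b A E := by
    have := hmeet iA iE (by rw [hA, hE]; exact hAE)
    rwa [hA, hE] at this
  have hpA : 0 < b B A := by have := hample iA; rwa [hA] at this
  have hpE : 0 < b B E := by have := hample iE; rwa [hE] at this
  -- linear independence of A, E
  have hind : LinearIndependent ℚ ![A, E] := by
    rw [LinearIndependent.pair_iff]
    intro s t hst
    have h1 : s * b B A + t * b B E = 0 := by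
      have := congrArg (b B) hst
      simpa [map_add, map_smul, smul_eq_mul] using this
    have h2 : s * b A A + t * b A E = 0 := by
      have := congrArg (b A) hst
      simpa [map_add, map_smul, smul_eq_mul] using this
    have key : s * (b A A * b B E - b A E * b B A) = 0 := by
      linear_combination b B E * h2 - b A E * h1
    have hfac : b A A * b B E - b A E * b B A < 0 := by
      nlinarith [mul_nonneg hm hpA.le]
    have hs : s = 0 := (mul_eq_zero.1 key).resolve_right (ne_of_lt hfac)
    refine ⟨hs, ?_⟩
    rw [hs] at h1
    have : t * b B E = 0 := by linarith
    exact (mul_eq_zero.1 this).resolve_right (ne_of_gt hpE)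
  -- the span
  have hrangeAB : Set.range ![A, B] = {A, B} := by
    ext x; simp [Fin.exists_fin_two, or_comm]
  have hrangeAE : Set.range ![A, E] = {A, E} := by
    ext x; simp [Fin.exists_fin_two, or_comm]
  let bAB : Module.Basis (Fin 2) ℚ V := Module.Basis.mk hABind (by rw [hrangeAB, hABspan])
  have hfin : Module.Finite ℚ V := Module.Finite.of_basis bAB
  have hrank : Module.finrank ℚ V = 2 := by
    rw [Module.finrank_eq_card_basis bAB, Fintype.card_fin]
  have hspan : Submodule.span ℚ {A, E} = ⊤ := by
    rw [← hrangeAE]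
    exact hind.span_eq_top_of_card_eq_finrank (by simp [hrank])
  refine ⟨⟨hind, hspan⟩, ?_⟩
  -- each integral curve class lies in the cone spanned by A, E
  have hcls : ∀ i : ι, ∃ h ℓ : ℚ, 0 ≤ h ∧ 0 ≤ ℓ ∧ cls i = h • A + ℓ • E := by
    intro i
    by_cases hiA : cls i = A
    · exact ⟨1, 0, zero_le_one, le_refl 0, by simp [hiA]⟩
    by_cases hiE : cls i = E
    · exact ⟨0, 1, le_refl 0, zero_le_one, by simp [hiE]⟩
    obtain ⟨h, ℓ, hx⟩ := Submodule.mem_span_pair.1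
      (by rw [hspan]; exact Submodule.mem_top : cls i ∈ Submodule.span ℚ {A, E})
    have hAx : 0 ≤ b A (cls i) := by
      have := hmeet iA i (by rw [hA]; exact fun h => hiA h.symm)
      rwa [hA] at this
    have hEx : 0 ≤ b E (cls i) := by
      have := hmeet iE i (by rw [hE]; exact fun h => hiE h.symm)
      rwa [hE] at this
    have hBx : 0 < b B (cls i) := hample i
    rw [← hx] at hAx hEx hBx
    have r1 : 0 ≤ h * b A A + ℓ * b A E := by
      simpa [map_add, map_smul, smul_eq_mul] using hAx
    have r2 : 0 ≤ h * b A E + ℓ * b E E := by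
      have : b E A = b A E := hsymm E A
      simpa [map_add, map_smul, smul_eq_mul, this, mul_comm] using hEx
    have r3 : 0 < h * b B A + ℓ * b B E := by
      simpa [map_add, map_smul, smul_eq_mul] using hBx
    refine ⟨h, ℓ, ?_, ?_, hx.symm⟩
    · have hfac : 0 < b B E * b A E - b E E * b B A := by
        nlinarith [mul_nonneg hpE.le hm, mul_pos (neg_pos.2 hE2) hpA]
      have hpos : 0 < h * (b B E * b A E - b E E * b B A) := by
        nlinarith [mul_nonneg hpE.le r2, mul_pos (neg_pos.2 hE2) r3]
      rcases mul_pos_iff.1 hpos with ⟨p1, _⟩ | ⟨_, p2⟩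
      · exact p1.le
      · exact absurd hfac (not_lt.2 p2.le)
    · have hfac : 0 < b B A * b A E - b A A * b B E := by
        nlinarith [mul_nonneg hpA.le hm, mul_pos (neg_pos.2 hA2) hpE]
      have hpos : 0 < ℓ * (b B A * b A E - b A A * b B E) := by
        nlinarith [mul_nonneg hpA.le r1, mul_pos (neg_pos.2 hA2) r3]
      rcases mul_pos_iff.1 hpos with ⟨p1, _⟩ | ⟨_, p2⟩
      · exact p1.le
      · exact absurd hfac (not_lt.2 p2.le)
  -- equality of the two sets
  rw [hEff]
  ext x
  constructor
  · rintro ⟨s, c, hc, rfl⟩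
    choose H L hH hL hHL using hcls
    refine ⟨∑ i ∈ s, c i * H i, ∑ i ∈ s, c i * L i,
      Finset.sum_nonneg fun i _ => mul_nonneg (hc i) (hH i),
      Finset.sum_nonneg fun i _ => mul_nonneg (hc i) (hL i), ?_⟩
    rw [Finset.sum_smul, Finset.sum_smul, ← Finset.sum_add_distrib]
    refine Finset.sum_congr rfl fun i _ => ?_
    rw [hHL i, smul_add, smul_smul, smul_smul]
  · rintro ⟨h, ℓ, hh, hℓ, rfl⟩
    have hiAiE : iA ≠ iE := fun hcon => hAE (by rw [← hA, ← hE, hcon])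
    refine ⟨{iA, iE}, fun i => if i = iA then h else if i = iE then ℓ else 0,
      fun i => by dsimp only; split_ifs <;> simp [hh, hℓ], ?_⟩
    rw [Finset.sum_pair hiAiE]
    simp [hiAiE.symm, hA, hE]
end
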